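/- Suppose there exist reals ε_X, ε_Y ∈ [0,1] with ε_X · ε_Y > 0 such that d_TV(π_X^y, π_X^{y'}) ≤ 1 − ε_X for all y, y' ∈ 𝒴, and d_TV(π_Y^x, π_Y^{x'}) ≤ 1 − ε_Y for all x, x' ∈ 𝒳. Then for every function f : 𝒳 × 𝒴 → ℝ, Var f ≤ (2/(ε_X + ε_Y)) · (E[Var_X f] + E[Var_Y f]). -/

import Mathlib

open scoped BigOperators Classical

noncomputable section

/-- Expectation of `f` under the (finitely supported) density `p`. -/
def pmean {α : Type*} [Fintype α] (p f : α → ℝ) : ℝ := ∑ a, p a * f a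

/-- Variance of `f` under the density `p`. -/
def pvar {α : Type*} [Fintype α] (p f : α → ℝ) : ℝ :=
  pmean p (fun a => (f a - pmean p f) ^ 2)

/-- Entropy of `f` under the density `p` (with the convention `0 log 0 = 0`,
which is automatic since `Real.log 0 = 0`). -/
def pent {α : Type*} [Fintype α] (p f : α → ℝ) : ℝ :=
  pmean p (fun a => f a * Real.log (f a)) - pmean p f * Real.log (pmean p f)

/-- Total variation distance between two densities. -/
def ptv {α : Type*} [Fintype α] (p q : α → ℝ) : ℝ := (1 / 2) * ∑ a, |p a - q a|

/-- Marginal on the first coordinate. -/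
def margX {X Y : Type*} [Fintype X] [Fintype Y] (π : X × Y → ℝ) : X → ℝ :=
  fun x => ∑ y, π (x, y)

/-- Marginal on the second coordinate. -/
def margY {X Y : Type*} [Fintype X] [Fintype Y] (π : X × Y → ℝ) : Y → ℝ :=
  fun y => ∑ x, π (x, y)

/-- Conditional distribution of the first coordinate given the second equals `y`. -/
def condX {X Y : Type*} [Fintype X] [Fintype Y] (π : X × Y → ℝ) (y : Y) : X → ℝ :=
  fun x => π (x, y) / margY π y

/-- Conditional distribution of the second coordinate given the first equals `x`. -/
def condY {X Y : Type*} [Fintype X] [Fintype Y] (π : X × Y → ℝ) (x : X) : Y → ℝ :=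
  fun y => π (x, y) / margX π x

/-! ### Auxiliary material -/

/-- The oscillation (max minus min) of a function on a finite nonempty type. -/
def oscf {α : Type*} [Fintype α] [Nonempty α] (u : α → ℝ) : ℝ :=
  Finset.univ.sup' Finset.univ_nonempty u - Finset.univ.inf' Finset.univ_nonempty u

lemma inf'_le_apply {α : Type*} [Fintype α] [Nonempty α] (u : α → ℝ) (a : α) :
    Finset.univ.inf' Finset.univ_nonempty u ≤ u a :=
  Finset.inf'_le _ (Finset.mem_univ a)

lemma apply_le_sup' {α : Type*} [Fintype α] [Nonempty α] (u : α → ℝ) (a : α) :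
    u a ≤ Finset.univ.sup' Finset.univ_nonempty u :=
  Finset.le_sup' _ (Finset.mem_univ a)

lemma sub_inf_le_oscf {α : Type*} [Fintype α] [Nonempty α] (u : α → ℝ) (a : α) :
    u a - Finset.univ.inf' Finset.univ_nonempty u ≤ oscf u := by
  have := apply_le_sup' u a; unfold oscf; linarith

lemma oscf_nonneg {α : Type*} [Fintype α] [Nonempty α] (u : α → ℝ) : 0 ≤ oscf u := by
  have a := Classical.arbitrary α
  have h1 := inf'_le_apply u a
  have h2 := apply_le_sup' u a
  unfold oscf; linarith

/-- Weighted Cauchy–Schwarz inequality. -/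
lemma weighted_cs {α : Type*} [Fintype α] (w u v : α → ℝ) (hw : ∀ a, 0 ≤ w a) :
    (∑ a, w a * (u a * v a)) ^ 2 ≤ (∑ a, w a * (u a * u a)) * (∑ a, w a * (v a * v a)) := by
  have h := Finset.sum_mul_sq_le_sq_mul_sq Finset.univ
    (fun a => Real.sqrt (w a) * u a) (fun a => Real.sqrt (w a) * v a)
  have e1 : ∀ a : α, Real.sqrt (w a) * u a * (Real.sqrt (w a) * v a) = w a * (u a * v a) := by
    intro a
    have : Real.sqrt (w a) * Real.sqrt (w a) = w a := Real.mul_self_sqrt (hw a)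
    linear_combination (u a * v a) * this
  have e2 : ∀ a : α, (Real.sqrt (w a) * u a) ^ 2 = w a * (u a * u a) := by
    intro a
    have : Real.sqrt (w a) * Real.sqrt (w a) = w a := Real.mul_self_sqrt (hw a)
    linear_combination (u a * u a) * this
  have e3 : ∀ a : α, (Real.sqrt (w a) * v a) ^ 2 = w a * (v a * v a) := by
    intro a
    have : Real.sqrt (w a) * Real.sqrt (w a) = w a := Real.mul_self_sqrt (hw a)
    linear_combination (v a * v a) * this
  calc (∑ a, w a * (u a * v a)) ^ 2
      = (∑ a, Real.sqrt (w a) * u a * (Real.sqrt (w a) * v a)) ^ 2 := by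
        rw [Finset.sum_congr rfl (fun a _ => (e1 a))]
    _ ≤ (∑ a, (Real.sqrt (w a) * u a) ^ 2) * (∑ a, (Real.sqrt (w a) * v a) ^ 2) := h
    _ = (∑ a, w a * (u a * u a)) * (∑ a, w a * (v a * v a)) := by
        rw [Finset.sum_congr rfl (fun a _ => (e2 a)), Finset.sum_congr rfl (fun a _ => (e3 a))]

lemma sum_max_eq_ptv {α : Type*} [Fintype α] (p q : α → ℝ)
    (hp : ∑ a, p a = 1) (hq : ∑ a, q a = 1) :
    ∑ a, max (p a - q a) 0 = ptv p q := by
  have e : ∀ a : α, max (p a - q a) 0 = ((p a - q a) + |p a - q a|) / 2 := by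
    intro a
    rcases le_or_gt 0 (p a - q a) with h | h
    · rw [max_eq_left h, abs_of_nonneg h]; ring
    · rw [max_eq_right h.le, abs_of_neg h]; ring
  rw [Finset.sum_congr rfl (fun a _ => e a)]
  rw [← Finset.sum_div, Finset.sum_add_distrib, Finset.sum_sub_distrib, hp, hq]
  unfold ptv; ring

/-- Single-step oscillation contraction for a kernel with total-variation
Dobrushin coefficient at most `δ`. -/
lemma osc_kernel_le {α β : Type*} [Fintype α] [Fintype β] [Nonempty α] [Nonempty β]
    (K : β → α → ℝ) (h1 : ∀ b, ∑ a, K b a = 1) (δ : ℝ)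
    (hδ : ∀ b b', ptv (K b) (K b') ≤ δ) (u : α → ℝ) :
    oscf (fun b => ∑ a, K b a * u a) ≤ δ * oscf u := by
  set v : β → ℝ := fun b => ∑ a, K b a * u a with hv
  obtain ⟨b, -, hb⟩ := Finset.exists_mem_eq_sup' (Finset.univ_nonempty (α := β)) v
  obtain ⟨b', -, hb'⟩ := Finset.exists_mem_eq_inf' (Finset.univ_nonempty (α := β)) v
  have hosc : oscf v = v b - v b' := by unfold oscf; rw [hb, hb']
  rw [hosc]
  set m := Finset.univ.inf' Finset.univ_nonempty u with hm
  have key : v b - v b' = ∑ a, (K b a - K b' a) * (u a - m) := by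
    have : ∀ a : α, (K b a - K b' a) * (u a - m)
        = K b a * u a - K b' a * u a - m * K b a + m * K b' a := by intro a; ring
    rw [Finset.sum_congr rfl (fun a _ => this a), Finset.sum_add_distrib,
      Finset.sum_sub_distrib, Finset.sum_sub_distrib, ← Finset.mul_sum, ← Finset.mul_sum,
      h1 b, h1 b']
    simp [hv]
  rw [key]
  have hbound : ∀ a : α, (K b a - K b' a) * (u a - m) ≤ max (K b a - K b' a) 0 * oscf u := by
    intro a
    have h0 : 0 ≤ u a - m := by have := inf'_le_apply u a; rw [hm]; linarith
    have h2 : u a - m ≤ oscf u := sub_inf_le_oscf u a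
    rcases le_or_gt 0 (K b a - K b' a) with h | h
    · rw [max_eq_left h]; exact mul_le_mul_of_nonneg_left h2 h
    · rw [max_eq_right h.le, zero_mul]
      exact mul_nonpos_of_nonpos_of_nonneg h.le h0
  calc ∑ a, (K b a - K b' a) * (u a - m) ≤ ∑ a, max (K b a - K b' a) 0 * oscf u :=
        Finset.sum_le_sum (fun a _ => hbound a)
    _ = (∑ a, max (K b a - K b' a) 0) * oscf u := by rw [Finset.sum_mul]
    _ = ptv (K b) (K b') * oscf u := by rw [sum_max_eq_ptv _ _ (h1 b) (h1 b')]
    _ ≤ δ * oscf u := mul_le_mul_of_nonneg_right (hδ b b') (oscf_nonneg u)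

/-- L² bound for a self-adjoint positive operator with oscillation contraction. -/
lemma contraction_main {α : Type*} [Fintype α] [Nonempty α] (μ : α → ℝ)
    (hμ : ∀ a, 0 ≤ μ a) (M : (α → ℝ) → α → ℝ) (δ : ℝ) (hδ0 : 0 ≤ δ)
    (hadj : ∀ u v : α → ℝ, ∑ a, μ a * (u a * M v a) = ∑ a, μ a * (M u a * v a))
    (hpsd : ∀ u : α → ℝ, 0 ≤ ∑ a, μ a * (u a * M u a))
    (hosc : ∀ u : α → ℝ, oscf (M u) ≤ δ * oscf u)
    (g : α → ℝ) (hmean : ∑ a, μ a * g a = 0) :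
    ∑ a, μ a * (g a * M g a) ≤ δ * ∑ a, μ a * g a ^ 2 := by
  classical
  set s : ℕ → ℝ := fun n => ∑ a, μ a * (g a * (M^[n] g) a) with hs
  set a0 : ℝ := ∑ a, μ a * g a ^ 2 with ha0
  have ha0nn : 0 ≤ a0 := Finset.sum_nonneg fun a _ => mul_nonneg (hμ a) (sq_nonneg _)
  have hs1 : ∑ a, μ a * (g a * M g a) = s 1 := by
    simp only [hs, Function.iterate_one]
  rw [hs1]
  have hadjit : ∀ (n : ℕ) (u v : α → ℝ),
      ∑ a, μ a * (u a * (M^[n] v) a) = ∑ a, μ a * ((M^[n] u) a * v a) := by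
    intro n
    induction n with
    | zero => intro u v; simp [Function.iterate_zero]
    | succ n ihn =>
      intro u v
      have e1 : M^[n+1] v = M^[n] (M v) := Function.iterate_succ_apply M n v
      have e2 : M^[n+1] u = M (M^[n] u) := Function.iterate_succ_apply' M n u
      rw [e1, ihn u (M v), hadj (M^[n] u) v, e2]
  have hoscit : ∀ n : ℕ, oscf (M^[n] g) ≤ δ ^ n * oscf g := by
    intro n
    induction n with
    | zero => simp [Function.iterate_zero]
    | succ n ihn =>
      have e2 : M^[n+1] g = M (M^[n] g) := Function.iterate_succ_apply' M n g
      rw [e2]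
      calc oscf (M (M^[n] g)) ≤ δ * oscf (M^[n] g) := hosc _
        _ ≤ δ * (δ ^ n * oscf g) := mul_le_mul_of_nonneg_left ihn hδ0
        _ = δ ^ (n+1) * oscf g := by ring
  set C : ℝ := (∑ b, μ b * |g b|) * oscf g with hC
  have hbound : ∀ n : ℕ, s n ≤ C * δ ^ n := by
    intro n
    set v := M^[n] g with hv
    set m := Finset.univ.inf' Finset.univ_nonempty v with hm
    have e : s n = ∑ a, μ a * (g a * (v a - m)) := by
      have h' : ∀ a : α, μ a * (g a * (v a - m)) = μ a * (g a * v a) - m * (μ a * g a) := by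
        intro a; ring
      rw [Finset.sum_congr rfl fun a _ => h' a, Finset.sum_sub_distrib, ← Finset.mul_sum,
        hmean, mul_zero, sub_zero]
    have hvle : oscf v ≤ δ ^ n * oscf g := hoscit n
    have hterm : ∀ a : α, μ a * (g a * (v a - m)) ≤ μ a * |g a| * (δ ^ n * oscf g) := by
      intro a
      have h0 : 0 ≤ v a - m := by have := inf'_le_apply v a; rw [hm]; linarith
      have h2 : v a - m ≤ δ ^ n * oscf g := le_trans (sub_inf_le_oscf v a) hvle
      have h3 : g a * (v a - m) ≤ |g a| * (δ ^ n * oscf g) := by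
        calc g a * (v a - m) ≤ |g a| * (v a - m) :=
              mul_le_mul_of_nonneg_right (le_abs_self _) h0
          _ ≤ |g a| * (δ ^ n * oscf g) := mul_le_mul_of_nonneg_left h2 (abs_nonneg _)
      calc μ a * (g a * (v a - m)) ≤ μ a * (|g a| * (δ ^ n * oscf g)) :=
            mul_le_mul_of_nonneg_left h3 (hμ a)
        _ = μ a * |g a| * (δ ^ n * oscf g) := by ring
    calc s n = ∑ a, μ a * (g a * (v a - m)) := e
      _ ≤ ∑ a, μ a * |g a| * (δ ^ n * oscf g) := Finset.sum_le_sum fun a _ => hterm a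
      _ = (∑ a, μ a * |g a|) * (δ ^ n * oscf g) := by rw [← Finset.sum_mul]
      _ = C * δ ^ n := by rw [hC]; ring
  have hs1nn : 0 ≤ s 1 := by
    have := hpsd g
    simpa [hs, Function.iterate_one] using this
  have hdouble : ∀ n : ℕ, (s (2 ^ n)) ^ 2 ≤ a0 * s (2 ^ (n + 1)) := by
    intro n
    have e : s (2 ^ (n + 1)) = ∑ a, μ a * ((M^[2 ^ n] g) a * (M^[2 ^ n] g) a) := by
      have e1 : (2 : ℕ) ^ (n + 1) = 2 ^ n + 2 ^ n := by ring
      have e2 : M^[2 ^ (n+1)] g = M^[2 ^ n] (M^[2 ^ n] g) := by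
        rw [e1, Function.iterate_add_apply]
      rw [hs]
      simp only [e2]
      exact hadjit (2 ^ n) g (M^[2 ^ n] g)
    have cs := weighted_cs μ g (M^[2 ^ n] g) hμ
    have e0 : ∑ a, μ a * (g a * g a) = a0 := by
      rw [ha0]; exact Finset.sum_congr rfl fun a _ => by ring
    rw [e0, ← e] at cs
    exact cs
  have hP : ∀ n : ℕ, (s 1) ^ (2 ^ n) ≤ a0 ^ (2 ^ n - 1) * s (2 ^ n) := by
    intro n
    induction n with
    | zero => simp
    | succ n ihn =>
      calc (s 1) ^ (2 ^ (n+1)) = ((s 1) ^ (2 ^ n)) ^ 2 := by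
            rw [pow_succ, pow_mul]
        _ ≤ (a0 ^ (2 ^ n - 1) * s (2 ^ n)) ^ 2 := by
            apply pow_le_pow_left₀ (pow_nonneg hs1nn _) ihn
        _ = a0 ^ (2 * (2 ^ n - 1)) * (s (2 ^ n)) ^ 2 := by
            rw [mul_pow, ← pow_mul]; ring_nf
        _ ≤ a0 ^ (2 * (2 ^ n - 1)) * (a0 * s (2 ^ (n+1))) :=
            mul_le_mul_of_nonneg_left (hdouble n) (pow_nonneg ha0nn _)
        _ = a0 ^ (2 ^ (n+1) - 1) * s (2 ^ (n+1)) := by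
            rw [← mul_assoc, ← pow_succ]
            congr 2
            have h1 : (1:ℕ) ≤ 2 ^ n := Nat.one_le_two_pow
            have h2 : (2:ℕ) ≤ 2 ^ (n+1) := by
              calc (2:ℕ) = 2 ^ 1 := rfl
                _ ≤ 2 ^ (n+1) := Nat.pow_le_pow_right (by norm_num) (by omega)
            omega
  by_contra hcon
  push_neg at hcon
  have ha1pos : 0 < s 1 := lt_of_le_of_lt (mul_nonneg hδ0 ha0nn) hcon
  have ha0pos : 0 < a0 := by
    rcases ha0nn.lt_or_eq with h | h
    · exact h
    · exfalso
      have hsum0 : ∑ b : α, μ b * g b ^ 2 = 0 := by rw [← ha0, ← h]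
      have hz : ∀ b ∈ Finset.univ, μ b * g b ^ 2 = 0 :=
        (Finset.sum_eq_zero_iff_of_nonneg
          (fun a _ => mul_nonneg (hμ a) (sq_nonneg (g a)))).1 hsum0
      have hz' : ∀ b : α, μ b * g b = 0 := by
        intro b
        have := hz b (Finset.mem_univ b)
        have h2 : (μ b * g b) ^ 2 = μ b * (μ b * g b ^ 2) := by ring
        nlinarith [hμ b, sq_nonneg (μ b * g b)]
      have hz'' : s 1 = 0 := by
        rw [hs]
        simp only [Function.iterate_one]
        apply Finset.sum_eq_zero
        intro b _
        have e : μ b * (g b * M g b) = (μ b * g b) * M g b := by ring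
        rw [e, hz' b, zero_mul]
      rw [hz''] at ha1pos; exact lt_irrefl _ ha1pos
  have key : ∀ n : ℕ, (s 1) ^ (2 ^ n) ≤ (δ * a0) ^ (2 ^ n) * (C / a0) := by
    intro n
    have h1 : (1:ℕ) ≤ 2 ^ n := Nat.one_le_two_pow
    calc (s 1) ^ (2 ^ n) ≤ a0 ^ (2 ^ n - 1) * s (2 ^ n) := hP n
      _ ≤ a0 ^ (2 ^ n - 1) * (C * δ ^ (2 ^ n)) :=
          mul_le_mul_of_nonneg_left (hbound (2 ^ n)) (pow_nonneg ha0nn _)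
      _ = (δ * a0) ^ (2 ^ n) * (C / a0) := by
          have e : a0 ^ (2 ^ n) = a0 ^ (2 ^ n - 1) * a0 := by
            rw [← pow_succ]; congr 1; omega
          rw [mul_pow]
          field_simp
          rw [e]; ring
  have hδa0nn : 0 ≤ δ * a0 := mul_nonneg hδ0 ha0nn
  rcases eq_or_lt_of_le hδa0nn with h0 | hpos'
  · have hk := key 1
    rw [← h0] at hk
    simp only [pow_succ, pow_one] at hk
    nlinarith [ha1pos]
  · set r := s 1 / (δ * a0) with hr
    have hr1 : 1 < r := (one_lt_div hpos').2 hcon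
    have hrb : ∀ n : ℕ, r ^ n ≤ C / a0 := by
      intro n
      have h1 : r ^ (2 ^ n) ≤ C / a0 := by
        rw [hr, div_pow, div_le_iff₀ (pow_pos hpos' _)]
        calc (s 1) ^ (2 ^ n) ≤ (δ * a0) ^ (2 ^ n) * (C / a0) := key n
          _ = C / a0 * (δ * a0) ^ (2 ^ n) := by ring
      have h2 : r ^ n ≤ r ^ (2 ^ n) :=
        pow_le_pow_right₀ hr1.le n.lt_two_pow_self.le
      linarith
    obtain ⟨n, hn⟩ := pow_unbounded_of_one_lt (C / a0) hr1
    exact absurd (hrb n) (not_le.2 hn)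

set_option maxHeartbeats 1000000

/-- **Two-variable factorization of variance with strong correlation.**
If `d_TV(π_X^y, π_X^{y'}) ≤ 1 - ε_X` and `d_TV(π_Y^x, π_Y^{x'}) ≤ 1 - ε_Y` with
`ε_X, ε_Y ∈ [0,1]`, `ε_X ε_Y > 0`, then
`Var f ≤ (2/(ε_X + ε_Y)) (E[Var_X f] + E[Var_Y f])`. -/
theorem var_factorization_strong_correlation
    {X Y : Type*} [Fintype X] [Fintype Y] [Nonempty X] [Nonempty Y]
    (π : X × Y → ℝ) (hnn : ∀ z, 0 ≤ π z) (hsum : ∑ z, π z = 1)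
    (hX : ∀ x, 0 < margX π x) (hY : ∀ y, 0 < margY π y)
    (εX εY : ℝ) (hεX : εX ∈ Set.Icc (0 : ℝ) 1) (hεY : εY ∈ Set.Icc (0 : ℝ) 1)
    (hpos : 0 < εX * εY)
    (htvX : ∀ y y', ptv (condX π y) (condX π y') ≤ 1 - εX)
    (htvY : ∀ x x', ptv (condY π x) (condY π x') ≤ 1 - εY)
    (f : X × Y → ℝ) :
    pvar π f ≤ (2 / (εX + εY)) *
      ((∑ y, margY π y * pvar (condX π y) (fun x => f (x, y))) +
       (∑ x, margX π x * pvar (condY π x) (fun y => f (x, y)))) := by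
  obtain ⟨hεX0, hεX1⟩ := hεX
  obtain ⟨hεY0, hεY1⟩ := hεY
  have hεXpos : 0 < εX := by
    rcases lt_or_eq_of_le hεX0 with h | h
    · exact h
    · exfalso; rw [← h] at hpos; simp at hpos
  have hεYpos : 0 < εY := by
    rcases lt_or_eq_of_le hεY0 with h | h
    · exact h
    · exfalso; rw [← h] at hpos; simp at hpos
  have hP1 : ∀ y, ∑ x, condX π y x = 1 := by
    intro y; unfold condX; rw [← Finset.sum_div]
    exact div_self (hY y).ne'
  have hQ1 : ∀ x, ∑ y, condY π x y = 1 := by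
    intro x; unfold condY; rw [← Finset.sum_div]
    exact div_self (hX x).ne'
  have hπY : ∀ x y, margY π y * condX π y x = π (x, y) := by
    intro x y; unfold condX
    rw [mul_comm]
    exact div_mul_cancel₀ _ (hY y).ne'
  have hπX : ∀ x y, margX π x * condY π x y = π (x, y) := by
    intro x y; unfold condY
    rw [mul_comm]
    exact div_mul_cancel₀ _ (hX x).ne'
  set E := pmean π f with hE
  set F : X × Y → ℝ := fun z => f z - E with hF
  set g : Y → ℝ := fun y => ∑ x, condX π y x * F (x, y) with hg
  set k : X → ℝ := fun x => ∑ y, condY π x y * F (x, y) with hk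
  set V : ℝ := ∑ z, π z * F z ^ 2 with hV
  set G : ℝ := ∑ y, margY π y * g y ^ 2 with hG
  set H : ℝ := ∑ x, margX π x * k x ^ 2 with hH
  set S : ℝ := ∑ z : X × Y, π z * (g z.2 * k z.1) with hS
  have hVnn : 0 ≤ V := Finset.sum_nonneg fun z _ => mul_nonneg (hnn z) (sq_nonneg _)
  have hGnn : 0 ≤ G := Finset.sum_nonneg fun y _ => mul_nonneg (hY y).le (sq_nonneg _)
  have hHnn : 0 ≤ H := Finset.sum_nonneg fun x _ => mul_nonneg (hX x).le (sq_nonneg _)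
  have hpvar : pvar π f = V := by
    rw [hV]
    unfold pvar pmean
    apply Finset.sum_congr rfl
    intro z _
    simp only [hF, hE]
    rfl
  have hrowY : ∀ y, ∑ x, π (x, y) * F (x, y) = margY π y * g y := by
    intro y
    simp only [hg]
    rw [Finset.mul_sum]
    apply Finset.sum_congr rfl
    intro x _
    rw [← hπY x y]; ring
  have hrowX : ∀ x, ∑ y, π (x, y) * F (x, y) = margX π x * k x := by
    intro x
    simp only [hk]
    rw [Finset.mul_sum]
    apply Finset.sum_congr rfl
    intro y _
    rw [← hπX x y]; ring
  have hmY : ∀ y, ∑ x, π (x, y) = margY π y := fun y => rfl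
  have hmX : ∀ x, ∑ y, π (x, y) = margX π x := fun x => rfl
  have hFmean : ∑ z : X × Y, π z * F z = 0 := by
    have e : ∀ z : X × Y, π z * F z = π z * f z - E * π z := by
      intro z; simp only [hF]; ring
    rw [Finset.sum_congr rfl fun z _ => e z, Finset.sum_sub_distrib, ← Finset.mul_sum, hsum,
      mul_one, hE]
    unfold pmean
    ring
  have hgmean : ∑ y, margY π y * g y = 0 := by
    have e : ∑ z : X × Y, π z * F z = ∑ y, margY π y * g y := by
      rw [Fintype.sum_prod_type_right]
      exact Finset.sum_congr rfl fun y _ => hrowY y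
    rw [← e]; exact hFmean
  have hFg : ∑ z : X × Y, π z * (F z * g z.2) = G := by
    rw [Fintype.sum_prod_type_right, hG]
    apply Finset.sum_congr rfl
    intro y _
    calc ∑ x, π (x, y) * (F (x, y) * g y) = (∑ x, π (x, y) * F (x, y)) * g y := by
          rw [Finset.sum_mul]; apply Finset.sum_congr rfl; intro x _; ring
      _ = margY π y * g y ^ 2 := by rw [hrowY y]; ring
  have hFk : ∑ z : X × Y, π z * (F z * k z.1) = H := by
    rw [Fintype.sum_prod_type, hH]
    apply Finset.sum_congr rfl
    intro x _
    calc ∑ y, π (x, y) * (F (x, y) * k x) = (∑ y, π (x, y) * F (x, y)) * k x := by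
          rw [Finset.sum_mul]; apply Finset.sum_congr rfl; intro y _; ring
      _ = margX π x * k x ^ 2 := by rw [hrowX x]; ring
  have hgg : ∑ z : X × Y, π z * g z.2 ^ 2 = G := by
    have e2 : ∑ z : X × Y, π z * g z.2 ^ 2 = ∑ y, ∑ x, π (x, y) * g y ^ 2 := by
      rw [Fintype.sum_prod_type_right]
    rw [e2, hG]
    apply Finset.sum_congr rfl
    intro y _
    rw [← Finset.sum_mul, hmY y]
  have hkk : ∑ z : X × Y, π z * k z.1 ^ 2 = H := by
    have e2 : ∑ z : X × Y, π z * k z.1 ^ 2 = ∑ x, ∑ y, π (x, y) * k x ^ 2 := by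
      rw [Fintype.sum_prod_type]
    rw [e2, hH]
    apply Finset.sum_congr rfl
    intro x _
    rw [← Finset.sum_mul, hmX x]
  have hgk : ∑ z : X × Y, π z * (g z.2 * k z.1) = S := hS.symm
  have hmean' : ∀ y, pmean (condX π y) (fun x => f (x, y)) = g y + E := by
    intro y
    unfold pmean
    have e : ∀ x, condX π y x * f (x, y) = condX π y x * F (x, y) + E * condX π y x := by
      intro x; simp only [hF]; ring
    rw [Finset.sum_congr rfl fun x _ => e x, Finset.sum_add_distrib, ← Finset.mul_sum,
      hP1 y, mul_one]
  have hmean'' : ∀ x, pmean (condY π x) (fun y => f (x, y)) = k x + E := by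
    intro x
    unfold pmean
    have e : ∀ y, condY π x y * f (x, y) = condY π x y * F (x, y) + E * condY π x y := by
      intro y; simp only [hF]; ring
    rw [Finset.sum_congr rfl fun y _ => e y, Finset.sum_add_distrib, ← Finset.mul_sum,
      hQ1 x, mul_one]
  have hA : ∑ y, margY π y * pvar (condX π y) (fun x => f (x, y)) = V - G := by
    have step : ∀ y, margY π y * pvar (condX π y) (fun x => f (x, y))
        = ∑ x, π (x, y) * (F (x, y) - g y) ^ 2 := by
      intro y
      have e : pvar (condX π y) (fun x => f (x, y))
          = ∑ x, condX π y x * (F (x, y) - g y) ^ 2 := by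
        unfold pvar
        rw [hmean' y]
        unfold pmean
        apply Finset.sum_congr rfl
        intro x _
        simp only [hF]
        ring
      rw [e, Finset.mul_sum]
      apply Finset.sum_congr rfl
      intro x _
      rw [← hπY x y]; ring
    have e2 : ∑ z : X × Y, π z * (F z - g z.2) ^ 2
        = ∑ y, ∑ x, π (x, y) * (F (x, y) - g y) ^ 2 := by
      rw [Fintype.sum_prod_type_right]
    calc ∑ y, margY π y * pvar (condX π y) (fun x => f (x, y))
        = ∑ y, ∑ x, π (x, y) * (F (x, y) - g y) ^ 2 := Finset.sum_congr rfl fun y _ => step y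
      _ = ∑ z : X × Y, π z * (F z - g z.2) ^ 2 := e2.symm
      _ = V - G := by
          have expand : ∀ z : X × Y, π z * (F z - g z.2) ^ 2
              = π z * F z ^ 2 - 2 * (π z * (F z * g z.2)) + π z * g z.2 ^ 2 := by
            intro z; ring
          rw [Finset.sum_congr rfl fun z _ => expand z, Finset.sum_add_distrib,
            Finset.sum_sub_distrib, ← Finset.mul_sum, hFg, hgg, ← hV]
          ring
  have hB : ∑ x, margX π x * pvar (condY π x) (fun y => f (x, y)) = V - H := by
    have step : ∀ x, margX π x * pvar (condY π x) (fun y => f (x, y))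
        = ∑ y, π (x, y) * (F (x, y) - k x) ^ 2 := by
      intro x
      have e : pvar (condY π x) (fun y => f (x, y))
          = ∑ y, condY π x y * (F (x, y) - k x) ^ 2 := by
        unfold pvar
        rw [hmean'' x]
        unfold pmean
        apply Finset.sum_congr rfl
        intro y _
        simp only [hF]
        ring
      rw [e, Finset.mul_sum]
      apply Finset.sum_congr rfl
      intro y _
      rw [← hπX x y]; ring
    have e2 : ∑ z : X × Y, π z * (F z - k z.1) ^ 2
        = ∑ x, ∑ y, π (x, y) * (F (x, y) - k x) ^ 2 := by
      rw [Fintype.sum_prod_type]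
    calc ∑ x, margX π x * pvar (condY π x) (fun y => f (x, y))
        = ∑ x, ∑ y, π (x, y) * (F (x, y) - k x) ^ 2 := Finset.sum_congr rfl fun x _ => step x
      _ = ∑ z : X × Y, π z * (F z - k z.1) ^ 2 := e2.symm
      _ = V - H := by
          have expand : ∀ z : X × Y, π z * (F z - k z.1) ^ 2
              = π z * F z ^ 2 - 2 * (π z * (F z * k z.1)) + π z * k z.1 ^ 2 := by
            intro z; ring
          rw [Finset.sum_congr rfl fun z _ => expand z, Finset.sum_add_distrib,
            Finset.sum_sub_distrib, ← Finset.mul_sum, hFk, hkk, ← hV]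
          ring
  -- operators
  set Top : (Y → ℝ) → X → ℝ := fun u x => ∑ y, condY π x y * u y with hTop
  set Pop : (X → ℝ) → Y → ℝ := fun u y => ∑ x, condX π y x * u x with hPop
  set Mop : (Y → ℝ) → Y → ℝ := fun u => Pop (Top u) with hMop
  have hkey : ∀ u v : Y → ℝ, ∑ y, margY π y * (u y * Mop v y)
      = ∑ x, margX π x * (Top u x * Top v x) := by
    intro u v
    calc ∑ y, margY π y * (u y * Mop v y)
        = ∑ y, ∑ x, π (x, y) * (u y * Top v x) := by
          apply Finset.sum_congr rfl; intro y _
          simp only [hMop, hPop]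
          rw [Finset.mul_sum, Finset.mul_sum]
          apply Finset.sum_congr rfl; intro x _
          rw [← hπY x y]; ring
      _ = ∑ x, ∑ y, π (x, y) * (u y * Top v x) := Finset.sum_comm
      _ = ∑ x, margX π x * (Top u x * Top v x) := by
          apply Finset.sum_congr rfl; intro x _
          calc ∑ y, π (x, y) * (u y * Top v x)
              = ∑ y, margX π x * (condY π x y * u y) * Top v x := by
                apply Finset.sum_congr rfl; intro y _; rw [← hπX x y]; ring
            _ = margX π x * (Top u x * Top v x) := by
                rw [← Finset.sum_mul, ← Finset.mul_sum]
                simp only [hTop]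
                ring
  have hadj : ∀ u v : Y → ℝ, ∑ y, margY π y * (u y * Mop v y)
      = ∑ y, margY π y * (Mop u y * v y) := by
    intro u v
    rw [hkey u v]
    have e : ∑ y, margY π y * (Mop u y * v y) = ∑ y, margY π y * (v y * Mop u y) :=
      Finset.sum_congr rfl fun y _ => by ring
    rw [e, hkey v u]
    apply Finset.sum_congr rfl; intro x _; ring
  have hpsd : ∀ u : Y → ℝ, 0 ≤ ∑ y, margY π y * (u y * Mop u y) := by
    intro u; rw [hkey u u]
    exact Finset.sum_nonneg fun x _ => mul_nonneg (hX x).le (mul_self_nonneg _)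
  set δ : ℝ := (1 - εX) * (1 - εY) with hδ
  have hδ0 : 0 ≤ δ := mul_nonneg (by linarith) (by linarith)
  have hoscM : ∀ u : Y → ℝ, oscf (Mop u) ≤ δ * oscf u := by
    intro u
    have h1 : oscf (Mop u) ≤ (1 - εX) * oscf (Top u) := by
      have h0 := osc_kernel_le (fun y => condX π y) hP1 (1 - εX) htvX (Top u)
      simpa only [hMop, hPop] using h0
    have h2 : oscf (Top u) ≤ (1 - εY) * oscf u := by
      have h0 := osc_kernel_le (fun x => condY π x) hQ1 (1 - εY) htvY u
      simpa only [hTop] using h0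
    calc oscf (Mop u) ≤ (1 - εX) * oscf (Top u) := h1
      _ ≤ (1 - εX) * ((1 - εY) * oscf u) := mul_le_mul_of_nonneg_left h2 (by linarith)
      _ = δ * oscf u := by rw [hδ]; ring
  have hcontr := contraction_main (margY π) (fun y => (hY y).le) Mop δ hδ0 hadj hpsd hoscM
    g hgmean
  have hTgsq : ∑ x, margX π x * (Top g x * Top g x) ≤ δ * G := by
    rw [← hkey g g]
    rw [hG]
    exact hcontr
  have hSalt : S = ∑ x, margX π x * (k x * Top g x) := by
    rw [hS, Fintype.sum_prod_type]
    apply Finset.sum_congr rfl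
    intro x _
    calc ∑ y, π (x, y) * (g y * k x)
        = ∑ y, margX π x * (condY π x y * g y) * k x := by
          apply Finset.sum_congr rfl; intro y _; rw [← hπX x y]; ring
      _ = margX π x * (k x * Top g x) := by
          rw [← Finset.sum_mul, ← Finset.mul_sum]
          simp only [hTop]
          ring
  have hS2 : S ^ 2 ≤ δ * G * H := by
    have cs := weighted_cs (margX π) k (Top g) (fun x => (hX x).le)
    rw [← hSalt] at cs
    have eH : (∑ x, margX π x * (k x * k x)) = H := by
      rw [hH]; apply Finset.sum_congr rfl; intro x _; ring
    rw [eH] at cs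
    calc S ^ 2 ≤ H * ∑ x, margX π x * (Top g x * Top g x) := cs
      _ ≤ H * (δ * G) := mul_le_mul_of_nonneg_left hTgsq hHnn
      _ = δ * G * H := by ring
  set ρ : ℝ := Real.sqrt δ with hρ
  have hρ0 : 0 ≤ ρ := Real.sqrt_nonneg δ
  have hρsq : ρ ^ 2 = δ := Real.sq_sqrt hδ0
  have hρ1 : ρ ≤ 1 - (εX + εY) / 2 := by
    rw [hρ]
    have h1 : 0 ≤ 1 - (εX + εY) / 2 := by linarith
    have h2 : δ ≤ (1 - (εX + εY) / 2) ^ 2 := by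
      rw [hδ]; linarith only [sq_nonneg (εX - εY)]
    calc Real.sqrt δ ≤ Real.sqrt ((1 - (εX + εY) / 2) ^ 2) := Real.sqrt_le_sqrt h2
      _ = 1 - (εX + εY) / 2 := Real.sqrt_sq h1
  clear_value E F g k V G H S Top Pop Mop δ ρ
  have hSle : 2 * S ≤ ρ * (G + H) := by
    rcases le_or_gt S 0 with h | h
    · linarith only [h, mul_nonneg hρ0 (add_nonneg hGnn hHnn)]
    · have hsq : (2 * S) ^ 2 ≤ (ρ * (G + H)) ^ 2 := by
        have e : (ρ * (G + H)) ^ 2 = δ * (G + H) ^ 2 := by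
          rw [mul_pow, hρsq]
        have h5 : 0 ≤ δ * (G - H) ^ 2 := mul_nonneg hδ0 (sq_nonneg _)
        rw [e]
        linarith only [hS2, h5]
      nlinarith only [hsq, mul_nonneg hρ0 (add_nonneg hGnn hHnn), h]
  set t : ℝ := 1 / (1 + ρ) with ht
  have h1ρ : 0 < 1 + ρ := by linarith
  have htpos : 0 < t := by rw [ht]; positivity
  have ht1 : (1 + ρ) * t = 1 := by rw [ht]; field_simp
  have hquad : 0 ≤ V + t^2*G + t^2*H + 2*t^2*S - 2*t*G - 2*t*H := by
    have hq0 : 0 ≤ ∑ z : X × Y, π z * (F z - t * g z.2 - t * k z.1)^2 :=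
      Finset.sum_nonneg fun z _ => mul_nonneg (hnn z) (sq_nonneg _)
    have hexp : ∑ z : X × Y, π z * (F z - t * g z.2 - t * k z.1)^2
        = V + t^2*G + t^2*H + 2*t^2*S - 2*t*G - 2*t*H := by
      have e : ∀ z : X × Y, π z * (F z - t * g z.2 - t * k z.1)^2
          = π z * F z ^ 2 + t^2 * (π z * g z.2 ^ 2) + t^2 * (π z * k z.1 ^ 2)
            + 2*t^2 * (π z * (g z.2 * k z.1)) - 2*t * (π z * (F z * g z.2))
            - 2*t * (π z * (F z * k z.1)) := by intro z; ring
      rw [Finset.sum_congr rfl fun z _ => e z]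
      rw [Finset.sum_sub_distrib, Finset.sum_sub_distrib, Finset.sum_add_distrib,
        Finset.sum_add_distrib, Finset.sum_add_distrib, ← Finset.mul_sum, ← Finset.mul_sum,
        ← Finset.mul_sum, ← Finset.mul_sum, ← Finset.mul_sum]
      rw [← hV, hgg, hkk, hgk, hFg, hFk]
    rw [← hexp]; exact hq0
  have hGH : G + H ≤ (1 + ρ) * V := by
    have h2 : 2*t^2*S ≤ t^2 * (ρ * (G+H)) := by
      have h2' := mul_le_mul_of_nonneg_left hSle (sq_nonneg t)
      linarith only [h2']
    have h3 : t^2 * (1+ρ) * (G + H) = t * (G + H) := by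
      have e : t^2 * (1+ρ) = t := by linear_combination t * ht1
      rw [e]
    have h4 : t * (G + H) ≤ V := by linarith only [hquad, h2, h3]
    calc G + H = (1 + ρ) * (t * (G + H)) := by rw [← mul_assoc, ht1, one_mul]
      _ ≤ (1 + ρ) * V := mul_le_mul_of_nonneg_left h4 h1ρ.le
  rw [hpvar, hA, hB]
  have hεsum : 0 < εX + εY := by linarith
  rw [div_mul_eq_mul_div, le_div_iff₀ hεsum]
  have hfin : (1 + ρ) * V ≤ (2 - (εX + εY)/2) * V := by
    apply mul_le_mul_of_nonneg_right _ hVnn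
    linarith [hρ1]
  linarith only [hGH, hfin]

end
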